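/- Let K be a commutative ring, m < n with n = m + gcd(m,n), d = gcd(m,n), and X, Y two m×n matrices over K. Let A(X,Y) be the (mn/d)×(mn/d) block bidiagonal matrix with diagonal blocks X and subdiagonal blocks Y. Then for every M = ((a,b),(c,e)) ∈ SL(2,K), det A(aX + cY, bX + eY) = det A(X,Y). -/

import Mathlib

/-- The (mn/d)×(mn/d) block bidiagonal matrix with `s+1` block-rows of height `m`
(and, when `(s+1)*m = s*n`, `s` block-columns of width `n`), having `X` in the
diagonal blocks `(i,i)` and `Y` in the subdiagonal blocks `(i+1,i)`, zero elsewhere. -/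
def blockBidiag {K : Type*} [CommRing K] {m n : ℕ} (hm : 0 < m) (hn : 0 < n) (s : ℕ)
    (X Y : Matrix (Fin m) (Fin n) K) :
    Matrix (Fin ((s + 1) * m)) (Fin ((s + 1) * m)) K :=
  Matrix.of fun r c =>
    if r.val / m = c.val / n then
      X ⟨r.val % m, Nat.mod_lt _ hm⟩ ⟨c.val % n, Nat.mod_lt _ hn⟩
    else if r.val / m = c.val / n + 1 then
      Y ⟨r.val % m, Nat.mod_lt _ hm⟩ ⟨c.val % n, Nat.mod_lt _ hn⟩
    else 0

open MvPolynomial Matrix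

namespace SL2Det

variable {K : Type*} [CommRing K]

/-- the linear form `a*λ + b*μ`. -/
noncomputable def lin (a b : K) : MvPolynomial (Fin 2) K := C a * X 0 + C b * X 1

lemma lin_isHomogeneous (a b : K) : (lin a b).IsHomogeneous 1 :=
  ((isHomogeneous_X _ _).C_mul _).add ((isHomogeneous_X _ _).C_mul _)

/-- the binary form `(aλ+bμ)^(k-j) * (cλ+eμ)^j`. -/
noncomputable def form (a b c e : K) (k j : ℕ) : MvPolynomial (Fin 2) K :=
  lin a b ^ (k - j) * lin c e ^ j

lemma form_isHomogeneous (a b c e : K) {k j : ℕ} (h : j ≤ k) :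
    (form a b c e k j).IsHomogeneous k := by
  have := ((lin_isHomogeneous a b).pow (k - j)).mul ((lin_isHomogeneous c e).pow j)
  simpa [form, Nat.sub_add_cancel h] using this

/-- exponent finsupp `λ^p μ^q`. -/
noncomputable def mexp (p q : ℕ) : Fin 2 →₀ ℕ := Finsupp.single 0 p + Finsupp.single 1 q

@[simp] lemma mexp_apply0 (p q : ℕ) : mexp p q 0 = p := by
  simp [mexp, Finsupp.single_apply]

@[simp] lemma mexp_apply1 (p q : ℕ) : mexp p q 1 = q := by
  simp [mexp, Finsupp.single_apply]

lemma mexp_degree (p q : ℕ) : (mexp p q).degree = p + q := by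
  have : ∀ d : Fin 2 →₀ ℕ, d.degree = d 0 + d 1 := by
    intro d
    rw [Finsupp.degree_apply, Finset.sum_subset (Finset.subset_univ _)
      (fun i _ h => Finsupp.notMem_support_iff.mp h)]
    exact Fin.sum_univ_two d
  rw [this]; simp

/-- entries of the substitution matrix. -/
noncomputable def ent (a b c e : K) (k i j : ℕ) : K :=
  coeff (mexp (k - i) i) (form a b c e k j)

lemma ent_eq_zero (a b c e : K) {k i j : ℕ} (hj : j ≤ k) (hi : k < i) :
    ent a b c e k i j = 0 := by
  refine (form_isHomogeneous a b c e hj).coeff_eq_zero ?_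
  rw [mexp_degree]; omega

lemma coeff_X0_mul (p q : ℕ) (g : MvPolynomial (Fin 2) K) :
    coeff (mexp (p + 1) q) (X 0 * g) = coeff (mexp p q) g := by
  have h : mexp (p + 1) q = Finsupp.single (0 : Fin 2) 1 + mexp p q := by
    simp only [mexp, Finsupp.single_add]; abel
  rw [h, coeff_X_mul]

lemma coeff_X1_mul (p q : ℕ) (g : MvPolynomial (Fin 2) K) :
    coeff (mexp p (q + 1)) (X 1 * g) = coeff (mexp p q) g := by
  have h : mexp p (q + 1) = Finsupp.single (1 : Fin 2) 1 + mexp p q := by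
    simp only [mexp, Finsupp.single_add]; abel
  rw [h, coeff_X_mul]

lemma coeff_X0_mul_zero (q : ℕ) (g : MvPolynomial (Fin 2) K) :
    coeff (mexp 0 q) (X 0 * g) = 0 := by
  rw [coeff_X_mul', if_neg]
  simp [Finsupp.mem_support_iff]

lemma coeff_X1_mul_zero (p : ℕ) (g : MvPolynomial (Fin 2) K) :
    coeff (mexp p 0) (X 1 * g) = 0 := by
  rw [coeff_X_mul', if_neg]
  simp [Finsupp.mem_support_iff]

lemma form_succ_left (a b c e : K) {k j : ℕ} (hj : j ≤ k) :
    form a b c e (k + 1) j = lin a b * form a b c e k j := by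
  rw [form, form, show k + 1 - j = (k - j) + 1 by omega, pow_succ']
  ring

lemma form_succ_right (a b c e : K) (k j : ℕ) :
    form a b c e (k + 1) (j + 1) = lin c e * form a b c e k j := by
  rw [form, form, show k + 1 - (j + 1) = k - j by omega, pow_succ']
  ring

lemma ent_rec_a (a b c e : K) {k j : ℕ} (hj : j ≤ k) (i : ℕ) :
    ent a b c e (k + 1) (i + 1) j
      = a * ent a b c e k (i + 1) j + b * ent a b c e k i j := by
  rw [ent, form_succ_left a b c e hj, lin, add_mul, coeff_add, mul_assoc, mul_assoc,
    coeff_C_mul, coeff_C_mul, show k + 1 - (i + 1) = k - i by omega]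
  congr 1
  · congr 1
    by_cases hik : i < k
    · rw [show k - i = (k - (i + 1)) + 1 by omega, coeff_X0_mul]; rfl
    · rw [show k - i = 0 by omega, coeff_X0_mul_zero,
        ent_eq_zero a b c e hj (show k < i + 1 by omega)]
  · rw [coeff_X1_mul]; rfl

lemma ent_rec_a0 (a b c e : K) {k j : ℕ} (hj : j ≤ k) :
    ent a b c e (k + 1) 0 j = a * ent a b c e k 0 j := by
  rw [ent, form_succ_left a b c e hj, lin, add_mul, coeff_add, mul_assoc, mul_assoc,
    coeff_C_mul, coeff_C_mul, Nat.sub_zero]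
  rw [show coeff (mexp (k+1) 0) (X 0 * form a b c e k j) = coeff (mexp k 0) (form a b c e k j)
    from coeff_X0_mul k 0 _, coeff_X1_mul_zero]
  simp [ent]

lemma ent_rec_c (a b c e : K) {k j : ℕ} (hj : j ≤ k) (i : ℕ) :
    ent a b c e (k + 1) (i + 1) (j + 1)
      = c * ent a b c e k (i + 1) j + e * ent a b c e k i j := by
  rw [ent, form_succ_right, lin, add_mul, coeff_add, mul_assoc, mul_assoc,
    coeff_C_mul, coeff_C_mul, show k + 1 - (i + 1) = k - i by omega]
  congr 1
  · congr 1
    by_cases hik : i < k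
    · rw [show k - i = (k - (i + 1)) + 1 by omega, coeff_X0_mul]; rfl
    · rw [show k - i = 0 by omega, coeff_X0_mul_zero,
        ent_eq_zero a b c e hj (show k < i + 1 by omega)]
  · rw [coeff_X1_mul]; rfl

lemma ent_rec_c0 (a b c e : K) (k j : ℕ) :
    ent a b c e (k + 1) 0 (j + 1) = c * ent a b c e k 0 j := by
  rw [ent, form_succ_right, lin, add_mul, coeff_add, mul_assoc, mul_assoc,
    coeff_C_mul, coeff_C_mul, Nat.sub_zero]
  rw [show coeff (mexp (k+1) 0) (X 0 * form a b c e k j) = coeff (mexp k 0) (form a b c e k j)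
    from coeff_X0_mul k 0 _, coeff_X1_mul_zero]
  simp [ent]

lemma coeff_lin_pow_mu (c e : K) (i : ℕ) :
    coeff (mexp 0 i) (lin c e ^ i) = e ^ i := by
  induction i with
  | zero => simp [mexp]
  | succ i ih =>
    rw [pow_succ', show (lin c e : MvPolynomial (Fin 2) K) * lin c e ^ i
        = C c * (X 0 * lin c e ^ i) + C e * (X 1 * lin c e ^ i) by rw [lin]; ring,
      coeff_add, coeff_C_mul, coeff_C_mul, coeff_X0_mul_zero, coeff_X1_mul, ih]
    ring

lemma coeff_lin_pow_la (a b : K) (p : ℕ) :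
    coeff (mexp p 0) (lin a b ^ p) = a ^ p := by
  induction p with
  | zero => simp [mexp]
  | succ p ih =>
    rw [pow_succ', show (lin a b : MvPolynomial (Fin 2) K) * lin a b ^ p
        = C a * (X 0 * lin a b ^ p) + C b * (X 1 * lin a b ^ p) by rw [lin]; ring,
      coeff_add, coeff_C_mul, coeff_C_mul, coeff_X1_mul_zero, coeff_X0_mul, ih]
    ring

/-- the substitution matrix on binary forms of degree `N-1`. -/
noncomputable def Sm (a b c e : K) (N : ℕ) : Matrix (Fin N) (Fin N) K :=
  Matrix.of fun i j => ent a b c e (N - 1) i j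

lemma lin_pow_b_zero (a : K) (p : ℕ) :
    (lin a 0 : MvPolynomial (Fin 2) K) ^ p = monomial (Finsupp.single 0 p) (a ^ p) := by
  have h : (lin a 0 : MvPolynomial (Fin 2) K) = C a * X 0 := by simp [lin]
  rw [h, mul_pow, ← C_pow, C_mul_X_pow_eq_monomial]

lemma lin_pow_c_zero (e : K) (p : ℕ) :
    (lin 0 e : MvPolynomial (Fin 2) K) ^ p = monomial (Finsupp.single 1 p) (e ^ p) := by
  have h : (lin 0 e : MvPolynomial (Fin 2) K) = C e * X 1 := by simp [lin]
  rw [h, mul_pow, ← C_pow, C_mul_X_pow_eq_monomial]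

lemma single0_le_mexp {p p' q : ℕ} : Finsupp.single (0 : Fin 2) p ≤ mexp p' q ↔ p ≤ p' := by
  rw [Finsupp.single_le_iff, mexp_apply0]

lemma single1_le_mexp {p q q' : ℕ} : Finsupp.single (1 : Fin 2) q ≤ mexp p q' ↔ q ≤ q' := by
  rw [Finsupp.single_le_iff, mexp_apply1]

lemma mexp_sub_single0 (p q : ℕ) : mexp p q - Finsupp.single (0 : Fin 2) p = Finsupp.single 1 q := by
  rw [mexp, add_tsub_cancel_left]

lemma mexp_sub_single1 (p q : ℕ) : mexp p q - Finsupp.single (1 : Fin 2) q = Finsupp.single 0 p := by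
  rw [mexp, add_comm, add_tsub_cancel_left]

lemma ent_b_zero_lt (a c e : K) {k i j : ℕ} (hi : i ≤ k) (hij : j < i) :
    ent a 0 c e k i j = 0 := by
  rw [ent, form, lin_pow_b_zero, coeff_monomial_mul', if_neg]
  rw [single0_le_mexp]
  omega

lemma ent_b_zero_diag (a c e : K) {k i : ℕ} (hi : i ≤ k) :
    ent a 0 c e k i i = a ^ (k - i) * e ^ i := by
  rw [ent, form, lin_pow_b_zero, coeff_monomial_mul', if_pos (single0_le_mexp.mpr le_rfl),
    mexp_sub_single0, show (Finsupp.single (1 : Fin 2) i) = mexp 0 i by simp [mexp],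
    coeff_lin_pow_mu]

lemma ent_c_zero_lt (a b e : K) {k i j : ℕ} (hj : j ≤ k) (hij : i < j) :
    ent a b 0 e k i j = 0 := by
  rw [ent, form, lin_pow_c_zero, coeff_mul_monomial', if_neg]
  rw [single1_le_mexp]
  omega

lemma ent_c_zero_diag (a b e : K) {k i : ℕ} (hi : i ≤ k) :
    ent a b 0 e k i i = a ^ (k - i) * e ^ i := by
  rw [ent, form, lin_pow_c_zero, coeff_mul_monomial', if_pos (single1_le_mexp.mpr le_rfl),
    mexp_sub_single1, show (Finsupp.single (0 : Fin 2) (k - i)) = mexp (k - i) 0 by simp [mexp],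
    coeff_lin_pow_la]

lemma prod_diag (a e : K) (N : ℕ) :
    (∏ i : Fin N, a ^ (N - 1 - (i : ℕ)) * e ^ (i : ℕ)) = (a * e) ^ (N * (N - 1) / 2) := by
  rw [Finset.prod_mul_distrib, Finset.prod_pow_eq_pow_sum, Finset.prod_pow_eq_pow_sum]
  have h1 : ∑ i : Fin N, (i : ℕ) = N * (N - 1) / 2 := by
    rw [Fin.sum_univ_eq_sum_range (fun i => i) N, Finset.sum_range_id]
  have h2 : ∑ i : Fin N, (N - 1 - (i : ℕ)) = N * (N - 1) / 2 := by
    rw [Fin.sum_univ_eq_sum_range (fun i => N - 1 - i) N,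
      Finset.sum_range_reflect (fun i => i) N, Finset.sum_range_id]
  rw [h1, h2, mul_pow]

lemma det_Sm_b_zero (a c e : K) (N : ℕ) :
    (Sm a 0 c e N).det = (a * e) ^ (N * (N - 1) / 2) := by
  rw [Matrix.det_of_upperTriangular (M := Sm a 0 c e N)
    (fun i j (h : (j : Fin N) < i) => ent_b_zero_lt a c e (by omega) h)]
  rw [← prod_diag a e N]
  exact Finset.prod_congr rfl fun i _ => ent_b_zero_diag a c e (by omega)

lemma det_Sm_c_zero (a b e : K) (N : ℕ) :
    (Sm a b 0 e N).det = (a * e) ^ (N * (N - 1) / 2) := by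
  rw [Matrix.det_of_lowerTriangular (Sm a b 0 e N)
    (fun i j h => ent_c_zero_lt a b e (by omega) h)]
  rw [← prod_diag a e N]
  exact Finset.prod_congr rfl fun i _ => ent_c_zero_diag a b e (by omega)

lemma degree_eq_two (d : Fin 2 →₀ ℕ) : d.degree = d 0 + d 1 := by
  rw [Finsupp.degree_apply, Finset.sum_subset (Finset.subset_univ _)
    (fun i _ h => Finsupp.notMem_support_iff.mp h)]
  exact Fin.sum_univ_two d

lemma monomial_mexp (p q : ℕ) (v : K) :
    (monomial (mexp p q) v : MvPolynomial (Fin 2) K) = C v * (X 0 ^ p * X 1 ^ q) := by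
  rw [X_pow_eq_monomial, X_pow_eq_monomial, monomial_mul, C_mul_monomial]
  simp [mexp]

lemma homog_decomp {k : ℕ} {p : MvPolynomial (Fin 2) K} (hp : p.IsHomogeneous k) :
    p = ∑ l : Fin (k + 1), monomial (mexp (k - (l : ℕ)) l) (coeff (mexp (k - (l : ℕ)) l) p) := by
  ext d
  rw [coeff_sum]
  simp only [coeff_monomial]
  by_cases hd : d 0 + d 1 = k
  · have hd1 : d 1 < k + 1 := by omega
    have hmd : mexp (k - d 1) (d 1) = d := by
      ext i
      match i with
      | (0 : Fin 2) => rw [mexp_apply0]; omega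
      | (1 : Fin 2) => rw [mexp_apply1]
    rw [Finset.sum_eq_single (⟨d 1, hd1⟩ : Fin (k + 1))]
    · rw [if_pos hmd, hmd]
    · intro l _ hne
      rw [if_neg]
      intro h
      apply hne
      have := congrFun (congrArg (fun f : Fin 2 →₀ ℕ => (f : Fin 2 → ℕ)) h) 1
      simp only [mexp_apply1] at this
      exact Fin.ext this
    · intro h; exact absurd (Finset.mem_univ _) h
  · have hz : coeff d p = 0 := hp.coeff_eq_zero (by rw [degree_eq_two]; omega)
    rw [hz]
    symm
    apply Finset.sum_eq_zero
    intro l _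
    rw [if_neg]
    intro h
    apply hd
    have h0 := congrFun (congrArg (fun f : Fin 2 →₀ ℕ => (f : Fin 2 → ℕ)) h) 0
    have h1 := congrFun (congrArg (fun f : Fin 2 →₀ ℕ => (f : Fin 2 → ℕ)) h) 1
    simp only [mexp_apply0, mexp_apply1] at h0 h1
    have hl : (l : ℕ) ≤ k := by omega
    omega

/-- the substitution algebra map. -/
noncomputable def sbst (a b c e : K) :
    MvPolynomial (Fin 2) K →ₐ[K] MvPolynomial (Fin 2) K :=
  aeval ![lin a b, lin c e]

lemma sbst_C (a b c e v : K) : sbst a b c e (C v) = C v := by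
  simp [sbst, algebraMap_eq]

lemma sbst_mono (a b c e : K) (p q : ℕ) :
    sbst a b c e (X 0 ^ p * X 1 ^ q) = lin a b ^ p * lin c e ^ q := by
  simp [sbst]

lemma sbst_lin (a b c e a' b' : K) :
    sbst a b c e (lin a' b') = lin (a * a' + c * b') (b * a' + e * b') := by
  rw [lin, map_add, _root_.map_mul, _root_.map_mul, sbst_C, sbst_C,
    show sbst a b c e (X 0) = lin a b from by simp [sbst],
    show sbst a b c e (X 1) = lin c e from by simp [sbst],
    lin, lin, lin]
  simp only [C_add, C_mul]
  ring

lemma sbst_form (a b c e a' b' c' e' : K) (k j : ℕ) :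
    sbst a b c e (form a' b' c' e' k j)
      = form (a * a' + c * b') (b * a' + e * b') (a * c' + c * e') (b * c' + e * e') k j := by
  rw [form, _root_.map_mul, map_pow, map_pow, sbst_lin, sbst_lin, form]

lemma Sm_mul (a b c e a' b' c' e' : K) (N : ℕ) :
    Sm a b c e N * Sm a' b' c' e' N
      = Sm (a * a' + c * b') (b * a' + e * b') (a * c' + c * e') (b * c' + e * e') N := by
  match N with
  | 0 => ext i j; exact i.elim0
  | (k + 1) =>
    ext i j
    rw [Matrix.mul_apply]
    have hj : (j : ℕ) ≤ k := by omega
    set P : MvPolynomial (Fin 2) K := form a' b' c' e' k j with hP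
    have hPhom : P.IsHomogeneous k := form_isHomogeneous _ _ _ _ hj
    have key : coeff (mexp (k - (i : ℕ)) i) (sbst a b c e P)
        = ∑ l : Fin (k + 1), ent a b c e k i l * coeff (mexp (k - (l : ℕ)) l) P := by
      conv_lhs => rw [homog_decomp hPhom]
      rw [map_sum, coeff_sum]
      refine Finset.sum_congr rfl fun l _ => ?_
      rw [monomial_mexp, _root_.map_mul, sbst_C, coeff_C_mul, sbst_mono, mul_comm]
      rfl
    have lhs_eq : ∀ l : Fin (k + 1),
        Sm a b c e (k + 1) i l * Sm a' b' c' e' (k + 1) l j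
          = ent a b c e k i l * coeff (mexp (k - (l : ℕ)) l) P := fun l => rfl
    rw [Finset.sum_congr rfl fun l _ => lhs_eq l, ← key]
    show coeff _ (sbst a b c e P) = ent _ _ _ _ k i j
    rw [hP, sbst_form]
    rfl

lemma Sm_map {K' : Type*} [CommRing K'] (f : K →+* K') (a b c e : K) (N : ℕ) :
    (Sm a b c e N).map f = Sm (f a) (f b) (f c) (f e) N := by
  ext i j
  show f (ent a b c e (N - 1) i j) = ent (f a) (f b) (f c) (f e) (N - 1) i j
  rw [ent, ent, ← coeff_map]
  congr 1
  rw [form, form]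
  simp [lin, _root_.map_mul, map_pow, map_add]

lemma det_Sm_field {F : Type*} [Field F] (A B Cc E : F) (hE : E ≠ 0) (N : ℕ) :
    (Sm A B Cc E N).det = (A * E - B * Cc) ^ (N * (N - 1) / 2) := by
  have h1 : 1 * (A - B * (Cc * E⁻¹)) + Cc * E⁻¹ * B = A := by field_simp; ring
  have h2 : (0 : F) * (A - B * (Cc * E⁻¹)) + 1 * B = B := by ring
  have h3 : (1 : F) * 0 + Cc * E⁻¹ * E = Cc := by field_simp; ring
  have h4 : (0 : F) * 0 + 1 * E = E := by ring
  have dec : Sm 1 0 (Cc * E⁻¹) 1 N * Sm (A - B * (Cc * E⁻¹)) B 0 E N = Sm A B Cc E N := by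
    rw [Sm_mul, h1, h2, h3, h4]
  have hcomb : (A - B * (Cc * E⁻¹)) * E = A * E - B * Cc := by
    field_simp
  rw [← dec, Matrix.det_mul, det_Sm_b_zero, det_Sm_c_zero, hcomb, one_mul, one_pow, one_mul]

lemma det_Sm_univ (N : ℕ) :
    (Sm (X 0 : MvPolynomial (Fin 4) ℤ) (X 1) (X 2) (X 3) N).det
      = (X 0 * X 3 - X 1 * X 2) ^ (N * (N - 1) / 2) := by
  have hinj : Function.Injective
      (algebraMap (MvPolynomial (Fin 4) ℤ) (FractionRing (MvPolynomial (Fin 4) ℤ))) :=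
    IsFractionRing.injective _ _
  apply hinj
  rw [RingHom.map_det (algebraMap _ _), RingHom.mapMatrix_apply, Sm_map]
  have hE : algebraMap (MvPolynomial (Fin 4) ℤ) (FractionRing (MvPolynomial (Fin 4) ℤ))
      (X 3) ≠ 0 := fun h =>
    MvPolynomial.X_ne_zero (σ := Fin 4) (R := ℤ) 3 (hinj (by rw [h, map_zero]))
  rw [det_Sm_field _ _ _ _ hE, map_pow, map_sub, _root_.map_mul, _root_.map_mul]

lemma det_Sm (a b c e : K) (N : ℕ) :
    (Sm a b c e N).det = (a * e - b * c) ^ (N * (N - 1) / 2) := by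
  have h := det_Sm_univ N
  let φ : MvPolynomial (Fin 4) ℤ →+* K :=
    (aeval (R := ℤ) ![a, b, c, e] : MvPolynomial (Fin 4) ℤ →ₐ[ℤ] K).toRingHom
  have h2 := congrArg φ h
  rw [RingHom.map_det, RingHom.mapMatrix_apply, Sm_map, map_pow, map_sub, _root_.map_mul, _root_.map_mul] at h2
  have hx : ∀ i : Fin 4, φ (X i) = ![a, b, c, e] i := fun i => aeval_X _ i
  rw [hx 0, hx 1, hx 2, hx 3] at h2
  simpa using h2

open Kronecker

variable (m n : ℕ)

/-- the block bidiagonal matrix in typed (product-index) form. -/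
def Bmat (k : ℕ) (X Y : Matrix (Fin m) (Fin n) K) :
    Matrix (Fin (k + 2) × Fin m) (Fin (k + 1) × Fin n) K :=
  Matrix.of fun r c =>
    if (r.1 : ℕ) = (c.1 : ℕ) then X r.2 c.2
    else if (r.1 : ℕ) = (c.1 : ℕ) + 1 then Y r.2 c.2 else 0

lemma sum_ite_val {N : ℕ} (t : ℕ) (f : Fin N → K) :
    (∑ l : Fin N, if (l : ℕ) = t then f l else 0) = if h : t < N then f ⟨t, h⟩ else 0 := by
  split_ifs with h
  · rw [Finset.sum_eq_single (⟨t, h⟩ : Fin N)]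
    · rw [if_pos rfl]
    · intro l _ hne
      rw [if_neg fun hv => hne (Fin.ext hv)]
    · intro hmem; exact absurd (Finset.mem_univ _) hmem
  · apply Finset.sum_eq_zero
    intro l _
    rw [if_neg fun hv : (l : ℕ) = t => h (hv ▸ l.2)]

lemma ite_ite_split {c1 c2 : Prop} [Decidable c1] [Decidable c2] (hc : c1 → c2 → False)
    (x y : K) :
    (if c1 then x else if c2 then y else 0) = (if c1 then x else 0) + (if c2 then y else 0) := by
  by_cases h1 : c1
  · rw [if_pos h1, if_pos h1, if_neg fun h2 => hc h1 h2, add_zero]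
  · rw [if_neg h1, if_neg h1, zero_add]

lemma intertwine (k : ℕ) (X Y : Matrix (Fin m) (Fin n) K) (a b c e : K) :
    (Sm a b c e (k + 2) ⊗ₖ (1 : Matrix (Fin m) (Fin m) K)) * Bmat m n k X Y
      = Bmat m n k (a • X + c • Y) (b • X + e • Y)
          * (Sm a b c e (k + 1) ⊗ₖ (1 : Matrix (Fin n) (Fin n) K)) := by
  ext ⟨i, p⟩ ⟨j, q⟩
  rw [Matrix.mul_apply, Matrix.mul_apply, Fintype.sum_prod_type, Fintype.sum_prod_type]
  have hL : ∀ (l : Fin (k + 2)) (u : Fin m),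
      (Sm a b c e (k + 2) ⊗ₖ (1 : Matrix (Fin m) (Fin m) K)) (i, p) (l, u)
          * Bmat m n k X Y (l, u) (j, q)
        = if u = p then Sm a b c e (k + 2) i l * Bmat m n k X Y (l, p) (j, q) else 0 := by
    intro l u
    by_cases h : u = p
    · subst h; simp [Matrix.one_apply]
    · simp [Matrix.one_apply, Ne.symm h, h]
  have hR : ∀ (l : Fin (k + 1)) (u : Fin n),
      Bmat m n k (a • X + c • Y) (b • X + e • Y) (i, p) (l, u)
          * (Sm a b c e (k + 1) ⊗ₖ (1 : Matrix (Fin n) (Fin n) K)) (l, u) (j, q)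
        = if u = q then Bmat m n k (a • X + c • Y) (b • X + e • Y) (i, p) (l, q)
            * Sm a b c e (k + 1) l j else 0 := by
    intro l u
    by_cases h : u = q
    · subst h; simp [Matrix.one_apply]
    · simp [Matrix.one_apply, Ne.symm h, h]
  simp only [hL, hR, Finset.sum_ite_eq', Finset.mem_univ, if_true]
  have hj : (j : ℕ) ≤ k := by omega
  -- evaluate the left-hand sum
  have lhs_eq : (∑ l : Fin (k + 2), Sm a b c e (k + 2) i l * Bmat m n k X Y (l, p) (j, q))
      = ent a b c e (k + 1) i j * X p q + ent a b c e (k + 1) i ((j : ℕ) + 1) * Y p q := by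
    have step : ∀ l : Fin (k + 2),
        Sm a b c e (k + 2) i l * Bmat m n k X Y (l, p) (j, q)
          = (if (l : ℕ) = (j : ℕ) then Sm a b c e (k + 2) i l * X p q else 0)
            + (if (l : ℕ) = (j : ℕ) + 1 then Sm a b c e (k + 2) i l * Y p q else 0) := by
      intro l
      rw [show Bmat m n k X Y (l, p) (j, q)
        = if (l : ℕ) = (j : ℕ) then X p q else if (l : ℕ) = (j : ℕ) + 1 then Y p q else 0
        from rfl, ite_ite_split (by omega) (X p q) (Y p q)]
      rw [mul_add, mul_ite, mul_zero, mul_ite, mul_zero]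
    rw [Finset.sum_congr rfl fun l _ => step l, Finset.sum_add_distrib,
      sum_ite_val ((j : ℕ)) (fun l => Sm a b c e (k + 2) i l * X p q),
      sum_ite_val ((j : ℕ) + 1) (fun l => Sm a b c e (k + 2) i l * Y p q),
      dif_pos (show (j : ℕ) < k + 2 by omega), dif_pos (show (j : ℕ) + 1 < k + 2 by omega)]
    rfl
  rw [lhs_eq]
  -- evaluate the right-hand sum, by cases on i
  induction i using Fin.cases with
  | zero =>
    have step : ∀ l : Fin (k + 1),
        Bmat m n k (a • X + c • Y) (b • X + e • Y) ((0 : Fin (k + 2)), p) (l, q)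
            * Sm a b c e (k + 1) l j
          = if (l : ℕ) = 0
              then (a • X + c • Y) p q * Sm a b c e (k + 1) l j else 0 := by
      intro l
      rw [show Bmat m n k (a • X + c • Y) (b • X + e • Y) ((0 : Fin (k + 2)), p) (l, q)
        = if ((0 : Fin (k + 2)) : ℕ) = (l : ℕ) then (a • X + c • Y) p q
          else if ((0 : Fin (k + 2)) : ℕ) = (l : ℕ) + 1 then (b • X + e • Y) p q else 0 from rfl]
      by_cases h : (l : ℕ) = 0
      · rw [if_pos (show ((0 : Fin (k + 2)) : ℕ) = (l : ℕ) by simp [h]), if_pos h]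
      · rw [if_neg (by simp only [Fin.val_zero]; omega),
          if_neg (by simp only [Fin.val_zero]; omega), zero_mul, if_neg h]
    rw [Finset.sum_congr rfl fun l _ => step l,
      sum_ite_val 0 (fun l => (a • X + c • Y) p q * Sm a b c e (k + 1) l j),
      dif_pos (show 0 < k + 1 by omega)]
    show ent a b c e (k + 1) ((0 : Fin (k+2)) : ℕ) j * X p q
        + ent a b c e (k + 1) ((0 : Fin (k+2)) : ℕ) ((j : ℕ) + 1) * Y p q
      = (a • X + c • Y) p q * ent a b c e k 0 j
    rw [Fin.val_zero, ent_rec_a0 a b c e hj, ent_rec_c0]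
    simp only [Matrix.add_apply, Matrix.smul_apply, smul_eq_mul]
    ring
  | succ iv =>
    have step : ∀ l : Fin (k + 1),
        Bmat m n k (a • X + c • Y) (b • X + e • Y) (iv.succ, p) (l, q)
            * Sm a b c e (k + 1) l j
          = (if (l : ℕ) = (iv : ℕ) + 1
              then (a • X + c • Y) p q * Sm a b c e (k + 1) l j else 0)
            + (if (l : ℕ) = (iv : ℕ)
              then (b • X + e • Y) p q * Sm a b c e (k + 1) l j else 0) := by
      intro l
      rw [show Bmat m n k (a • X + c • Y) (b • X + e • Y) (iv.succ, p) (l, q)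
        = if ((iv.succ : Fin (k + 2)) : ℕ) = (l : ℕ) then (a • X + c • Y) p q
          else if ((iv.succ : Fin (k + 2)) : ℕ) = (l : ℕ) + 1 then (b • X + e • Y) p q else 0
          from rfl]
      simp only [Fin.val_succ]
      by_cases h1 : (l : ℕ) = (iv : ℕ) + 1
      · rw [if_pos h1.symm, if_pos h1, if_neg (by omega), add_zero]
      · by_cases h2 : (l : ℕ) = (iv : ℕ)
        · rw [if_neg (by omega), if_pos (by omega), if_neg h1, if_pos h2, zero_add]
        · rw [if_neg (by omega), if_neg (by omega), zero_mul, if_neg h1, if_neg h2, add_zero]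
    rw [Finset.sum_congr rfl fun l _ => step l, Finset.sum_add_distrib,
      sum_ite_val ((iv : ℕ) + 1) (fun l => (a • X + c • Y) p q * Sm a b c e (k + 1) l j),
      sum_ite_val ((iv : ℕ)) (fun l => (b • X + e • Y) p q * Sm a b c e (k + 1) l j),
      dif_pos (show (iv : ℕ) < k + 1 by omega)]
    have hfirst : (if h : (iv : ℕ) + 1 < k + 1
        then (a • X + c • Y) p q * Sm a b c e (k + 1) ⟨(iv : ℕ) + 1, h⟩ j else 0)
        = (a • X + c • Y) p q * ent a b c e k ((iv : ℕ) + 1) j := by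
      split_ifs with h
      · rfl
      · rw [ent_eq_zero a b c e hj (by omega), mul_zero]
    rw [hfirst]
    show ent a b c e (k + 1) ((iv.succ : Fin (k+2)) : ℕ) j * X p q
        + ent a b c e (k + 1) ((iv.succ : Fin (k+2)) : ℕ) ((j : ℕ) + 1) * Y p q
      = (a • X + c • Y) p q * ent a b c e k ((iv : ℕ) + 1) j
        + (b • X + e • Y) p q * ent a b c e k (iv : ℕ) j
    rw [Fin.val_succ, ent_rec_a a b c e hj, ent_rec_c a b c e hj]
    simp only [Matrix.add_apply, Matrix.smul_apply, smul_eq_mul]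
    ring


theorem aux {K : Type*} [CommRing K] {m n : ℕ} (hm : 0 < m) (hn : 0 < n) (k : ℕ)
    (key : (k + 1 + 1) * m = (k + 1) * n) (X Y : Matrix (Fin m) (Fin n) K)
    (a b c e : K) (hM : a * e - b * c = 1) :
    (blockBidiag hm hn (k + 1) (a • X + c • Y) (b • X + e • Y)).det
      = (blockBidiag hm hn (k + 1) X Y).det := by
  classical
  let eR : Fin ((k + 1 + 1) * m) ≃ Fin (k + 2) × Fin m := finProdFinEquiv.symm
  let eC : Fin ((k + 1 + 1) * m) ≃ Fin (k + 1) × Fin n := (finCongr key).trans finProdFinEquiv.symm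
  have hAB : ∀ X Y : Matrix (Fin m) (Fin n) K,
      blockBidiag hm hn (k + 1) X Y = (Bmat m n k X Y).submatrix eR eC := by
    intro X Y
    ext r c
    rfl
  have comm : ((Sm a b c e (k + 2) ⊗ₖ (1 : Matrix (Fin m) (Fin m) K)).submatrix eR eR)
        * blockBidiag hm hn (k + 1) X Y
      = blockBidiag hm hn (k + 1) (a • X + c • Y) (b • X + e • Y)
        * ((Sm a b c e (k + 1) ⊗ₖ (1 : Matrix (Fin n) (Fin n) K)).submatrix eC eC) := by
    rw [hAB, hAB, Matrix.submatrix_mul_equiv _ _ _ eR _, intertwine m n k X Y a b c e,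
      ← Matrix.submatrix_mul_equiv (Bmat m n k (a • X + c • Y) (b • X + e • Y)) _ _ eC _]
  have hdL : ((Sm a b c e (k + 2) ⊗ₖ (1 : Matrix (Fin m) (Fin m) K)).submatrix eR eR).det
      = 1 := by
    rw [Matrix.det_submatrix_equiv_self, Matrix.det_kronecker, det_Sm, Matrix.det_one, hM]
    simp
  have hdR : ((Sm a b c e (k + 1) ⊗ₖ (1 : Matrix (Fin n) (Fin n) K)).submatrix eC eC).det
      = 1 := by
    rw [Matrix.det_submatrix_equiv_self, Matrix.det_kronecker, det_Sm, Matrix.det_one, hM]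
    simp
  have hdet := congrArg Matrix.det comm
  rw [Matrix.det_mul, Matrix.det_mul, hdL, hdR, one_mul, mul_one] at hdet
  exact hdet.symm

end SL2Det

/-- for m < n with n = m + gcd(m,n) and M = ((a,b),(c,e)) ∈ SL(2,K),
det A(aX + cY, bX + eY) = det A(X,Y). -/
theorem det_blockBidiag_sl2_invariant (K : Type*) [CommRing K] (m n : ℕ)
    (hm : 0 < m) (hmn : m < n) (hgcd : n = m + Nat.gcd m n)
    (X Y : Matrix (Fin m) (Fin n) K)
    (a b c e : K) (hM : a * e - b * c = 1) :
    (blockBidiag hm (hm.trans hmn) (m / Nat.gcd m n) (a • X + c • Y) (b • X + e • Y)).det =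
      (blockBidiag hm (hm.trans hmn) (m / Nat.gcd m n) X Y).det := by
  have hdvd : Nat.gcd m n ∣ m := Nat.gcd_dvd_left m n
  have hd : 0 < Nat.gcd m n := Nat.gcd_pos_of_pos_left n hm
  have hs : 0 < m / Nat.gcd m n := Nat.div_pos (Nat.le_of_dvd hm hdvd) hd
  obtain ⟨k, hk⟩ : ∃ k, m / Nat.gcd m n = k + 1 :=
    ⟨m / Nat.gcd m n - 1, by omega⟩
  have hsd : (k + 1) * Nat.gcd m n = m := by
    rw [← hk]
    exact Nat.div_mul_cancel hdvd
  have key : (k + 1 + 1) * m = (k + 1) * n := by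
    calc (k + 1 + 1) * m = (k + 1) * m + m := by ring
    _ = (k + 1) * m + (k + 1) * Nat.gcd m n := by rw [hsd]
    _ = (k + 1) * (m + Nat.gcd m n) := by ring
    _ = (k + 1) * n := by rw [← hgcd]
  rw [hk]
  exact SL2Det.aux hm (hm.trans hmn) k key X Y a b c e hM
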